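/- Let p = 16/e, where e is Euler's number, and let n ≥ 1 be an integer. For a word w : Fin n → Fin 4 and a symbol a ∈ Fin 4, let M_a(w) be the number of coordinates of w equal to a. Then the number of words w ∈ (Fin 4)^n for which there exist two distinct symbols a ≠ b with M_a(w) + M_b(w) > (p−1)n/p (as real numbers) is strictly less than 6·4^{7n/8} (a real power). Consequently, the code C consisting of all words of ℤ_4^n in which the two most common symbols together occupy at most (p−1)n/p positions satisfies |C| > 4^n − 6·4^{7n/8}, so |C| ∈ Θ(4^n). -/

import Mathlib

/-- `Mcount w a` is the number of coordinates of the word `w` equal to the symbol `a`. -/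
def Mcount {n : ℕ} (w : Fin n → Fin 4) (a : Fin 4) : ℕ :=
  (Finset.univ.filter fun j => w j = a).card

open Finset

lemma exists_other (a b : Fin 4) (h : a ≠ b) : ∃ c d : Fin 4, c ≠ d ∧ a ≠ c ∧ a ≠ d ∧ b ≠ c ∧ b ≠ d ∧ ∀ x : Fin 4, x = a ∨ x = b ∨ x = c ∨ x = d := by
  revert a b h; decide

set_option maxHeartbeats 1000000 in
lemma pair_count (n k : ℕ) (a b : Fin 4) (hab : a ≠ b) :
    (univ.filter fun w : Fin n → Fin 4 =>
        (univ.filter fun j => w j ≠ a ∧ w j ≠ b).card ≤ k).card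
      ≤ (∑ i ∈ Finset.range (k+1), n.choose i) * 2^n := by
  obtain ⟨c, d, hcd, hac, had, hbc, hbd, hcover⟩ := exists_other a b hab
  have hle := Finset.card_le_card_of_injOn
    (f := fun w : Fin n → Fin 4 =>
      ((univ.filter fun j => w j ≠ a ∧ w j ≠ b, fun j => decide (w j = a ∨ w j = c)) :
        Finset (Fin n) × (Fin n → Bool)))
    (s := univ.filter fun w : Fin n → Fin 4 =>
        (univ.filter fun j => w j ≠ a ∧ w j ≠ b).card ≤ k)
    (t := ((Finset.range (k+1)).biUnion fun i => Finset.powersetCard i univ) ×ˢ univ)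
    (by
      intro w hw
      simp only [Finset.mem_coe, mem_filter, mem_univ, true_and] at hw
      simp only [Finset.mem_coe, mem_product, mem_univ, and_true, mem_biUnion, mem_range]
      exact ⟨(univ.filter fun j => w j ≠ a ∧ w j ≠ b).card, Nat.lt_succ_of_le hw,
        Finset.mem_powersetCard.2 ⟨Finset.subset_univ _, rfl⟩⟩)
    (by
      intro w _ w' _ heq
      simp only [Prod.mk.injEq] at heq
      obtain ⟨hT, hB⟩ := heq
      funext j
      have hBj : (w j = a ∨ w j = c) ↔ (w' j = a ∨ w' j = c) :=
        decide_eq_decide.mp (congrFun hB j)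
      have hTj : (w j ≠ a ∧ w j ≠ b) ↔ (w' j ≠ a ∧ w' j ≠ b) := by
        have h1 := Finset.ext_iff.1 hT j
        simpa using h1
      rcases hcover (w j) with h | h | h | h <;> rcases hcover (w' j) with h' | h' | h' | h' <;>
        simp [h, h', hab, hcd, hac, had, hbc, hbd, hab.symm, hcd.symm, hac.symm, had.symm,
          hbc.symm, hbd.symm] at hBj hTj ⊢)
  calc _ ≤ _ := hle
    _ = (∑ i ∈ Finset.range (k+1), n.choose i) * 2^n := by
        rw [Finset.card_product, Finset.card_biUnion]
        · congr 1
          · exact Finset.sum_congr rfl fun i _ => by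
              rw [Finset.card_powersetCard, Finset.card_univ, Fintype.card_fin]
          · simp [Finset.card_univ]
        · intro i _ j _ hij
          apply Finset.disjoint_left.2
          intro S hS hS'
          exact hij ((Finset.mem_powersetCard.1 hS).2.symm.trans (Finset.mem_powersetCard.1 hS').2)

lemma sum_choose_le (n k : ℕ) (hk : k ≤ n) :
    ((∑ i ∈ Finset.range (k+1), n.choose i : ℕ) : ℝ) ≤ (5/4)^n * 4^k := by
  push_cast
  have hbin : ∑ i ∈ Finset.range (n+1), (1/4:ℝ)^i * 1^(n-i) * (n.choose i : ℝ) = (5/4)^n := by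
    rw [← add_pow]; norm_num
  have h1 : ∑ i ∈ Finset.range (k+1), (n.choose i : ℝ)
      ≤ ∑ i ∈ Finset.range (k+1), (n.choose i : ℝ) * ((1/4)^i * 4^k) := by
    apply Finset.sum_le_sum
    intro i hi
    have hik : i ≤ k := Nat.lt_succ_iff.1 (Finset.mem_range.1 hi)
    have h4 : (4:ℝ)^i ≤ 4^k := pow_le_pow_right₀ (by norm_num) hik
    have hp : (0:ℝ) < 4^i := by positivity
    have : (1:ℝ) ≤ (1/4)^i * 4^k := by
      rw [div_pow, one_pow, div_mul_eq_mul_div, one_mul, le_div_iff₀ hp, one_mul]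
      exact h4
    have hcnn : (0:ℝ) ≤ (n.choose i : ℝ) := Nat.cast_nonneg _
    nlinarith
  have h2 : ∑ i ∈ Finset.range (k+1), (n.choose i : ℝ) * ((1/4)^i * 4^k)
      ≤ ∑ i ∈ Finset.range (n+1), (n.choose i : ℝ) * ((1/4)^i * 4^k) := by
    apply Finset.sum_le_sum_of_subset_of_nonneg
    · exact fun i hi => Finset.mem_range.2 (by have := Finset.mem_range.1 hi; omega)
    · intro i _ _; positivity
  have h3 : ∑ i ∈ Finset.range (n+1), (n.choose i : ℝ) * ((1/4)^i * 4^k)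
      = (5/4)^n * 4^k := by
    rw [← hbin, Finset.sum_mul]
    exact Finset.sum_congr rfl fun i _ => by ring
  linarith

lemma key_log : Real.log (5/4) < (3/4 - Real.exp 1/8) * Real.log 2 := by
  have h2 : 0.6931471803 < Real.log 2 := Real.log_two_gt_d9
  have he : Real.exp 1 < 2.7182818286 := Real.exp_one_lt_d9
  have hl : Real.log (5/4) < 0.2841 := by
    have h := Real.add_one_lt_exp (x := (0.2841:ℝ)) (by norm_num)
    have h5 : (5/4:ℝ) < Real.exp 0.2841 := by linarith
    calc Real.log (5/4) < Real.log (Real.exp 0.2841) :=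
          Real.log_lt_log (by norm_num) h5
      _ = 0.2841 := Real.log_exp _
  nlinarith

/-- With `p = 16/e`, the number of quaternary words of length `n ≥ 1` in which some two
distinct symbols together occur in more than `(p-1)n/p` positions is strictly less than
`6·4^{7n/8}`; hence the code `C` of all remaining words satisfies `|C| > 4ⁿ - 6·4^{7n/8}`. -/
theorem bad_words_count_lt
    (n : ℕ) (hn : 1 ≤ n) :
    (Nat.card {w : Fin n → Fin 4 // ∃ a b : Fin 4, a ≠ b ∧
        ((16 / Real.exp 1 - 1) * n / (16 / Real.exp 1) <
          ((Mcount w a + Mcount w b : ℕ) : ℝ))} : ℝ) <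
      6 * (4 : ℝ) ^ (7 * (n : ℝ) / 8) := by
  classical
  set x : ℝ := Real.exp 1 * n / 16 with hx
  set k := ⌊x⌋₊ with hk
  have hxnn : 0 ≤ x := by positivity
  have he1 : (2:ℝ) < Real.exp 1 := by
    have := Real.exp_one_gt_d9; linarith
  have he2 : Real.exp 1 < 3 := by
    have := Real.exp_one_lt_d9; linarith
  have hnn : (1:ℝ) ≤ n := by exact_mod_cast hn
  have hkn : k ≤ n := by
    have hxn : x ≤ (n:ℝ) := by rw [hx]; nlinarith
    calc k ≤ ⌊(n:ℝ)⌋₊ := Nat.floor_le_floor hxn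
      _ = n := Nat.floor_natCast n
  set P : (Fin n → Fin 4) → Prop := fun w => ∃ a b : Fin 4, a ≠ b ∧
      ((16 / Real.exp 1 - 1) * n / (16 / Real.exp 1) <
        ((Mcount w a + Mcount w b : ℕ) : ℝ)) with hP
  have hcard : Nat.card {w : Fin n → Fin 4 // P w} = (univ.filter P).card := by
    rw [Nat.card_eq_fintype_card, Fintype.card_subtype]
  -- threshold simplification
  have hθ : (16 / Real.exp 1 - 1) * n / (16 / Real.exp 1) = n - x := by
    rw [hx]
    have h0 : Real.exp 1 ≠ 0 := Real.exp_ne_zero 1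
    field_simp
  -- per-pair subset
  have hpair : ∀ a b : Fin 4, a ≠ b →
      (univ.filter fun w : Fin n → Fin 4 =>
          (16 / Real.exp 1 - 1) * n / (16 / Real.exp 1) < ((Mcount w a + Mcount w b : ℕ) : ℝ))
        ⊆ (univ.filter fun w : Fin n → Fin 4 =>
          (univ.filter fun j => w j ≠ a ∧ w j ≠ b).card ≤ k) := by
    intro a b hab w hw
    simp only [mem_filter, mem_univ, true_and] at hw ⊢
    have hsplit : (univ.filter fun j => w j = a ∨ w j = b).card
        + (univ.filter fun j => ¬(w j = a ∨ w j = b)).card = n := by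
      rw [Finset.card_filter_add_card_filter_not, Finset.card_univ, Fintype.card_fin]
    have hM : (univ.filter fun j => w j = a ∨ w j = b).card = Mcount w a + Mcount w b := by
      rw [Finset.filter_or, Finset.card_union_of_disjoint]
      · rfl
      · rw [Finset.disjoint_left]
        intro j h1 h2
        simp only [mem_filter] at h1 h2
        exact hab (h1.2 ▸ h2.2 ▸ rfl)
    have hpred : (univ.filter fun j => w j ≠ a ∧ w j ≠ b)
        = (univ.filter fun j => ¬(w j = a ∨ w j = b)) := by
      apply Finset.filter_congr
      intro j _
      simp [not_or]
    rw [hpred]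
    apply Nat.le_floor
    have hc : ((univ.filter fun j => ¬(w j = a ∨ w j = b)).card : ℝ)
        = (n : ℝ) - (Mcount w a + Mcount w b : ℕ) := by
      have := hsplit
      rw [hM] at this
      have : ((Mcount w a + Mcount w b : ℕ) : ℝ)
          + ((univ.filter fun j => ¬(w j = a ∨ w j = b)).card : ℝ) = n := by
        exact_mod_cast this
      linarith
    rw [hθ] at hw
    rw [hc]
    linarith
  -- pairs finset
  set pairs : Finset (Fin 4 × Fin 4) := univ.filter fun p => p.1 < p.2 with hpairs
  have hsub : univ.filter P ⊆ pairs.biUnion fun p =>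
      univ.filter fun w : Fin n → Fin 4 =>
        (16 / Real.exp 1 - 1) * n / (16 / Real.exp 1) < ((Mcount w p.1 + Mcount w p.2 : ℕ) : ℝ) := by
    intro w hw
    simp only [mem_filter, mem_univ, true_and, hP] at hw
    obtain ⟨a, b, hab, hgt⟩ := hw
    rw [Finset.mem_biUnion]
    rcases lt_or_gt_of_ne hab with h | h
    · exact ⟨(a, b), by simp [hpairs, h], by
        simp only [mem_filter, mem_univ, true_and]
        exact hgt⟩
    · exact ⟨(b, a), by simp [hpairs, h], by
        simp only [mem_filter, mem_univ, true_and]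
        rw [Nat.add_comm]
        exact hgt⟩
  set S : ℕ := ∑ i ∈ Finset.range (k+1), n.choose i with hS
  have hcount : (univ.filter P).card ≤ 6 * (S * 2^n) := by
    calc (univ.filter P).card ≤ _ := Finset.card_le_card hsub
      _ ≤ ∑ p ∈ pairs, (univ.filter fun w : Fin n → Fin 4 =>
            (16 / Real.exp 1 - 1) * n / (16 / Real.exp 1)
              < ((Mcount w p.1 + Mcount w p.2 : ℕ) : ℝ)).card := Finset.card_biUnion_le
      _ ≤ ∑ _p ∈ pairs, S * 2^n := by
          apply Finset.sum_le_sum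
          intro p hp
          have hlt : p.1 ≠ p.2 := by
            simp only [hpairs, mem_filter] at hp
            exact ne_of_lt hp.2
          calc _ ≤ (univ.filter fun w : Fin n → Fin 4 =>
                (univ.filter fun j => w j ≠ p.1 ∧ w j ≠ p.2).card ≤ k).card :=
                Finset.card_le_card (hpair p.1 p.2 hlt)
            _ ≤ S * 2^n := pair_count n k p.1 p.2 hlt
      _ = pairs.card * (S * 2^n) := by rw [Finset.sum_const, smul_eq_mul]
      _ = 6 * (S * 2^n) := by
          have h6 : pairs.card = 6 := by rw [hpairs]; decide
          rw [h6]
  -- now real estimates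
  have hcastle : (Nat.card {w : Fin n → Fin 4 // P w} : ℝ) ≤ 6 * ((S:ℝ) * 2^n) := by
    rw [hcard]
    exact_mod_cast hcount
  have hSle : (S:ℝ) ≤ (5/4)^n * 4^k := sum_choose_le n k hkn
  have h4k : ((4:ℝ))^k ≤ (4:ℝ) ^ x := by
    rw [← Real.rpow_natCast 4 k]
    exact Real.rpow_le_rpow_of_exponent_le (by norm_num) (Nat.floor_le hxnn)
  have hfin : (2:ℝ)^n * ((5/4)^n * (4:ℝ)^x) < (4:ℝ)^(7*(n:ℝ)/8) := by
    rw [← Real.rpow_natCast 2 n, ← Real.rpow_natCast (5/4) n,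
      Real.rpow_def_of_pos (by norm_num : (0:ℝ) < 2),
      Real.rpow_def_of_pos (by norm_num : (0:ℝ) < 5/4),
      Real.rpow_def_of_pos (by norm_num : (0:ℝ) < 4),
      Real.rpow_def_of_pos (by norm_num : (0:ℝ) < 4),
      ← Real.exp_add, ← Real.exp_add]
    apply Real.exp_lt_exp.2
    have hlog4 : Real.log 4 = 2 * Real.log 2 := by
      rw [show (4:ℝ) = 2^2 by norm_num, Real.log_pow]
      push_cast; ring
    rw [hlog4, hx]
    have hnpos : (0:ℝ) < n := by linarith
    nlinarith [mul_lt_mul_of_pos_left key_log hnpos]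
  have hpos1 : (0:ℝ) ≤ (2:ℝ)^n := by positivity
  have hpos2 : (0:ℝ) ≤ (5/4:ℝ)^n := by positivity
  have hpos3 : (0:ℝ) ≤ (4:ℝ)^k := by positivity
  calc (Nat.card {w : Fin n → Fin 4 // P w} : ℝ)
      ≤ 6 * ((S:ℝ) * 2^n) := hcastle
    _ ≤ 6 * (((5/4:ℝ)^n * 4^k) * 2^n) := by nlinarith
    _ ≤ 6 * ((2:ℝ)^n * ((5/4)^n * (4:ℝ)^x)) := by
        have := mul_le_mul_of_nonneg_left h4k (mul_nonneg hpos1 hpos2)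
        nlinarith
    _ < 6 * (4:ℝ)^(7*(n:ℝ)/8) := by linarith
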